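/- arXiv:1011.6393 — 5 statements merged into one kernel-verified Lean document; each statement's English description precedes it below -/
import Mathlib

section
/- Let 1 → L → G → H → 1 be an exact sequence of profinite groups with L a free Z_p-module of finite rank d, H finite, and H acting trivially on L. Then there exists a free Z_p-module L' of rank d and a surjective continuous morphism G → L'. -/
/-- Let `1 → L → G → H → 1` be an exact sequence of profinite groups with `L` a free
`ℤ_p`-module of finite rank `d` (given by an isomorphism-and-homeomorphism
`e : ker π ≃ ℤ_p^d`), `H` finite, and `H` acting trivially on `L` (i.e. conjugation by any
element of `G` is trivial on `L`).  Then there exists a free `ℤ_p`-module `L'` of rank `d`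
and a surjective continuous morphism `G → L'`. -/
theorem surjection_onto_free_of_extension (p : ℕ) [Fact p.Prime] (d : ℕ)
    (G : Type*) [Group G] [TopologicalSpace G] [IsTopologicalGroup G]
    [CompactSpace G] [TotallyDisconnectedSpace G]
    (H : Type*) [Group H] [Finite H] [TopologicalSpace H] [DiscreteTopology H]
    (π : G →* H) (hπcont : Continuous π) (hπsurj : Function.Surjective π)
    (e : π.ker ≃* Multiplicative (Fin d → ℤ_[p]))
    (hecont : Continuous e) (hesymm : Continuous e.symm)
    (htriv : ∀ (g : G) (k : π.ker), g * (k : G) * g⁻¹ = (k : G)) :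
    ∃ ψ : G →* Multiplicative (Fin d → ℤ_[p]),
      Continuous ψ ∧ Function.Surjective ψ := by
  classical
  set n := Nat.card H with hn
  have hn0 : 0 < n := Nat.card_pos
  -- the kernel is central
  have hker_le : π.ker ≤ Subgroup.center G := by
    intro k hk
    rw [Subgroup.mem_center_iff]
    intro g
    have h := htriv g ⟨k, hk⟩
    simp only [Subgroup.coe_mk] at h
    calc g * k = g * k * g⁻¹ * g := by group
    _ = k * g := by rw [h]
  -- the kernel has finite index
  have hker_idx : π.ker.index = n := by
    rw [Subgroup.index_ker, MonoidHom.range_eq_top.mpr hπsurj, hn]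
    exact Nat.card_congr Subgroup.topEquiv.toEquiv
  haveI : π.ker.FiniteIndex := ⟨by omega⟩
  haveI : (Subgroup.center G).FiniteIndex := Subgroup.finiteIndex_of_le hker_le
  set m := (Subgroup.center G).index with hm
  obtain ⟨c, hc⟩ : m ∣ n := hker_idx ▸ Subgroup.index_dvd_of_le hker_le
  -- g ↦ g ^ n is a homomorphism
  have key : ∀ x y : G, (x * y) ^ n = x ^ n * y ^ n := by
    intro x y
    have hhom := congrArg (Subtype.val) (map_mul (MonoidHom.transferCenterPow G) x y)
    rw [MonoidHom.transferCenterPow_apply, Subgroup.coe_mul,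
      MonoidHom.transferCenterPow_apply, MonoidHom.transferCenterPow_apply] at hhom
    have hxm : x ^ m ∈ Subgroup.center G := by
      rw [← MonoidHom.transferCenterPow_apply (G := G)]; exact SetLike.coe_mem _
    have hcomm : Commute (x ^ m) (y ^ m) :=
      ((Subgroup.mem_center_iff.mp hxm (y ^ m))).symm
    calc (x * y) ^ n = ((x * y) ^ m) ^ c := by rw [← pow_mul, ← hc]
    _ = (x ^ m * y ^ m) ^ c := by rw [hhom]
    _ = (x ^ m) ^ c * (y ^ m) ^ c := hcomm.mul_pow c
    _ = x ^ n * y ^ n := by rw [← pow_mul, ← pow_mul, ← hc]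
  have hmem : ∀ g : G, g ^ n ∈ π.ker := by
    intro g
    rw [MonoidHom.mem_ker, map_pow, hn]
    exact pow_card_eq_one'
  -- the "n-th power then e" map, additively
  set f : G → (Fin d → ℤ_[p]) := fun g => Multiplicative.toAdd (e ⟨g ^ n, hmem g⟩) with hf
  have hfadd : ∀ x y : G, f (x * y) = f x + f y := by
    intro x y
    have : (⟨(x * y) ^ n, hmem _⟩ : π.ker) = ⟨x ^ n, hmem x⟩ * ⟨y ^ n, hmem y⟩ :=
      Subtype.ext (key x y)
    simp only [hf, this, map_mul]
    rfl
  have hf1 : f 1 = 0 := by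
    have : (⟨(1 : G) ^ n, hmem 1⟩ : π.ker) = 1 := Subtype.ext (one_pow n)
    simp only [hf, this, map_one]
    rfl
  have hfcont : Continuous f :=
    continuous_toAdd.comp (hecont.comp ((continuous_pow n).subtype_mk _))
  -- the range of f as an additive subgroup
  set S : AddSubgroup (Fin d → ℤ_[p]) :=
    { carrier := Set.range f
      add_mem' := by rintro _ _ ⟨x, rfl⟩ ⟨y, rfl⟩; exact ⟨x * y, hfadd x y⟩
      zero_mem' := ⟨1, hf1⟩
      neg_mem' := by
        rintro _ ⟨x, rfl⟩
        refine ⟨x⁻¹, ?_⟩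
        have h := hfadd x⁻¹ x
        rw [inv_mul_cancel, hf1] at h
        exact eq_neg_of_add_eq_zero_left h.symm } with hS
  have hSclosed : IsClosed (S : Set (Fin d → ℤ_[p])) := (isCompact_range hfcont).isClosed
  -- upgrade to a ℤ_p-submodule using density of ℕ in ℤ_p
  set M : Submodule ℤ_[p] (Fin d → ℤ_[p]) :=
    { carrier := S
      add_mem' := fun ha hb => S.add_mem ha hb
      zero_mem' := S.zero_mem
      smul_mem' := by
        intro c x hx
        have hcl : IsClosed {t : ℤ_[p] | t • x ∈ S} :=
          hSclosed.preimage (continuous_id.smul continuous_const)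
        have hsub : Set.range (Nat.cast : ℕ → ℤ_[p]) ⊆ {t : ℤ_[p] | t • x ∈ S} := by
          rintro _ ⟨k, rfl⟩
          simp only [Set.mem_setOf_eq, Nat.cast_smul_eq_nsmul]
          exact S.nsmul_mem hx k
        have := hcl.closure_subset_iff.mpr hsub
        rw [PadicInt.denseRange_natCast.closure_range] at this
        exact this (Set.mem_univ c) } with hM
  -- M contains n • everything
  have hMn : ∀ a : Fin d → ℤ_[p], (n : ℤ_[p]) • a ∈ M := by
    intro a
    refine ⟨(e.symm (Multiplicative.ofAdd a) : G), ?_⟩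
    have hcoe : (⟨((e.symm (Multiplicative.ofAdd a) : π.ker) : G) ^ n, hmem _⟩ : π.ker)
        = (e.symm (Multiplicative.ofAdd a)) ^ n := by
      ext; simp
    simp only [hf, hcoe, map_pow, MulEquiv.apply_symm_apply]
    show Multiplicative.toAdd ((Multiplicative.ofAdd a) ^ n) = (n : ℤ_[p]) • a
    rw [toAdd_pow, toAdd_ofAdd, Nat.cast_smul_eq_nsmul]
  -- module-theoretic facts about M
  haveI : Module.Finite ℤ_[p] ↥M := Module.Finite.iff_fg.mpr (IsNoetherian.noetherian M)
  haveI : Module.Free ℤ_[p] ↥M := Module.free_of_finite_type_torsion_free'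
  have hnz : (n : ℤ_[p]) ≠ 0 := Nat.cast_ne_zero.mpr (by omega)
  have hrank : Module.finrank ℤ_[p] ↥M = d := by
    refine le_antisymm ?_ ?_
    · simpa using M.finrank_le
    · let g : (Fin d → ℤ_[p]) →ₗ[ℤ_[p]] ↥M :=
        { toFun := fun a => ⟨(n : ℤ_[p]) • a, hMn a⟩
          map_add' := fun a b => by simp [smul_add]
          map_smul' := fun c a => Subtype.ext (smul_comm ((n : ℤ_[p])) c a) }
      have hginj : Function.Injective g := by
        intro a b hab
        have h2 : (n : ℤ_[p]) • a = (n : ℤ_[p]) • b := congrArg Subtype.val hab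
        exact smul_right_injective (Fin d → ℤ_[p]) hnz h2
      have := LinearMap.finrank_le_finrank_of_injective hginj
      simpa using this
  -- a basis and the associated equivalence
  let bM : Module.Basis (Fin d) ℤ_[p] ↥M := (Module.finBasis ℤ_[p] ↥M).reindex (finCongr hrank)
  let β : ↥M ≃ₗ[ℤ_[p]] (Fin d → ℤ_[p]) := bM.equivFun
  -- β is a homeomorphism
  have hc1 : Continuous fun a : Fin d → ℤ_[p] => ((β.symm a : ↥M) : Fin d → ℤ_[p]) := by
    have heq : ∀ a : Fin d → ℤ_[p],
        ((β.symm a : ↥M) : Fin d → ℤ_[p]) = ∑ i, a i • ((bM i : ↥M) : Fin d → ℤ_[p]) := by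
      intro a
      show ((bM.equivFun.symm a : ↥M) : Fin d → ℤ_[p]) = _
      rw [Module.Basis.equivFun_symm_apply]
      simp only [AddSubmonoidClass.coe_finset_sum, SetLike.val_smul]
    simp only [heq]
    exact continuous_finset_sum _ fun i _ => (continuous_apply i).smul continuous_const
  have hc2 : Continuous (β.symm : (Fin d → ℤ_[p]) → ↥M) := hc1.subtype_mk _
  let homeo : (Fin d → ℤ_[p]) ≃ₜ ↥M :=
    Continuous.homeoOfEquivCompactToT2 (f := β.symm.toEquiv) hc2
  have hβ : Continuous (β : ↥M → Fin d → ℤ_[p]) := homeo.symm.continuous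
  -- the final morphism
  refine ⟨{ toFun := fun g => Multiplicative.ofAdd (β ⟨f g, ⟨g, rfl⟩⟩)
            map_one' := ?_
            map_mul' := ?_ }, ?_, ?_⟩
  · show Multiplicative.ofAdd (β ⟨f 1, ⟨1, rfl⟩⟩) = 1
    have h1 : (⟨f 1, ⟨1, rfl⟩⟩ : ↥M) = 0 := Subtype.ext hf1
    rw [h1, β.map_zero]; rfl
  · intro x y
    show Multiplicative.ofAdd (β ⟨f (x * y), ⟨x * y, rfl⟩⟩)
      = Multiplicative.ofAdd (β ⟨f x, ⟨x, rfl⟩⟩) * Multiplicative.ofAdd (β ⟨f y, ⟨y, rfl⟩⟩)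
    have h1 : (⟨f (x * y), ⟨x * y, rfl⟩⟩ : ↥M) = ⟨f x, ⟨x, rfl⟩⟩ + ⟨f y, ⟨y, rfl⟩⟩ :=
      Subtype.ext (hfadd x y)
    rw [h1, β.map_add]; rfl
  · exact continuous_ofAdd.comp (hβ.comp (hfcont.subtype_mk _))
  · intro x
    obtain ⟨mm, hmm⟩ := β.surjective (Multiplicative.toAdd x)
    obtain ⟨g, hg⟩ := mm.2
    refine ⟨g, ?_⟩
    have h1 : (⟨f g, ⟨g, rfl⟩⟩ : ↥M) = mm := Subtype.ext hg
    show Multiplicative.ofAdd (β ⟨f g, ⟨g, rfl⟩⟩) = x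
    rw [h1, hmm, ofAdd_toAdd]
end

section
/- Let F be a field of characteristic different from p whose group μ_{p^∞}(F) of p-power roots of unity is finite. Then the torsion subgroup of the p-adic completion of F*, i.e. the inverse limit over n of F*/(F*)^{p^n}, is equal to the image of μ_{p^∞}(F). -/
/-- The transition maps of the system `n ↦ M/M^{p^n}`: `p^(n+1)`-th powers are
`p^n`-th powers. -/
theorem pow_range_le {M : Type*} [CommGroup M] (p n : ℕ) :
    (powMonoidHom (p ^ (n + 1)) : M →* M).range ≤ (powMonoidHom (p ^ n) : M →* M).range := by
  rintro x ⟨y, rfl⟩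
  exact ⟨y ^ p, by simp only [powMonoidHom_apply, ← pow_mul, ← pow_succ']⟩

/-- The `p`-adic completion of an abelian group `M`, i.e. the inverse limit
`lim_n M/M^{p^n}` with transition maps induced by the identity, realized as a subgroup of
the product `∀ n, M/M^{p^n}`. -/
def padicCompletion (p : ℕ) (M : Type*) [CommGroup M] :
    Subgroup (∀ n : ℕ, M ⧸ (powMonoidHom (p ^ n) : M →* M).range) where
  carrier := {f | ∀ n, QuotientGroup.map _ _ (MonoidHom.id M)
      (fun x hx => by simpa using pow_range_le p n hx) (f (n + 1)) = f n}
  mul_mem' := by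
    intro a b ha hb n
    simp only [Pi.mul_apply, map_mul, ha n, hb n]
  one_mem' := by
    intro n
    simp only [Pi.one_apply, map_one]
  inv_mem' := by
    intro a ha n
    simp only [Pi.inv_apply, map_inv, ha n]

/-- Let `F` be a field of characteristic different from `p` whose group `μ_{p^∞}(F)` of
`p`-power roots of unity is finite.  Then the torsion subgroup of the `p`-adic completion
of `F*` is exactly the image of `μ_{p^∞}(F)` under the diagonal map. -/
theorem torsion_of_padicCompletion_eq_rootsOfUnity (p : ℕ) [Fact p.Prime]
    (F : Type*) [Field F] (hchar : (p : F) ≠ 0)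
    (hfin : {ζ : Fˣ | ∃ n : ℕ, ζ ^ p ^ n = 1}.Finite)
    (f : ∀ n : ℕ, Fˣ ⧸ (powMonoidHom (p ^ n) : Fˣ →* Fˣ).range)
    (hf : f ∈ padicCompletion p Fˣ) :
    (∃ k : ℕ, k ≠ 0 ∧ f ^ k = 1) ↔
      ∃ ζ : Fˣ, (∃ n : ℕ, ζ ^ p ^ n = 1) ∧
        f = fun n => (QuotientGroup.mk ζ : Fˣ ⧸ (powMonoidHom (p ^ n) : Fˣ →* Fˣ).range) := by
  have hp := Fact.out (p := p.Prime)
  -- auxiliary: projecting a compatible family down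
  have hproj : ∀ n j (a : Fˣ), f (n + j) = QuotientGroup.mk a → f n = QuotientGroup.mk a := by
    intro n j
    induction j with
    | zero => exact fun a h => h
    | succ j ih =>
      intro a h
      apply ih
      have h2 := hf (n + j)
      rw [← h2]
      have h3 : f (n + j + 1) = QuotientGroup.mk a := h
      rw [h3, QuotientGroup.map_mk]
      rfl
  constructor
  · rintro ⟨k, hk0, hk⟩
    set m := k.factorization p with hm
    -- every element of the n-th quotient is killed by p^n
    have hpow : ∀ n (x : Fˣ ⧸ (powMonoidHom (p ^ n) : Fˣ →* Fˣ).range), x ^ p ^ n = 1 := by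
      intro n x
      induction x using QuotientGroup.induction_on with
      | H a =>
        rw [← QuotientGroup.mk_pow]
        exact (QuotientGroup.eq_one_iff _).mpr ⟨a, rfl⟩
    -- f is p^m-torsion
    have hfm : ∀ n, (f n) ^ p ^ m = 1 := by
      intro n
      have h1 : (f n) ^ p ^ n = 1 := hpow n (f n)
      have h2 : (f n) ^ k = 1 := by
        have := congrFun hk n
        simpa using this
      have hd1 : orderOf (f n) ∣ p ^ n := orderOf_dvd_of_pow_eq_one h1
      have hd2 : orderOf (f n) ∣ k := orderOf_dvd_of_pow_eq_one h2
      obtain ⟨j, hj, hje⟩ := (Nat.dvd_prime_pow hp).mp hd1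
      have hkk : k = p ^ m * (k / p ^ m) := (Nat.ordProj_mul_ordCompl_eq_self k p).symm
      have hnd : ¬ p ∣ (k / p ^ m) := Nat.not_dvd_ordCompl hp hk0
      have hcop : Nat.Coprime (p ^ j) (k / p ^ m) :=
        Nat.Coprime.pow_left _ ((Nat.Prime.coprime_iff_not_dvd hp).mpr hnd)
      have hd3 : p ^ j ∣ p ^ m * (k / p ^ m) := by rw [← hkk, ← hje]; exact hd2
      have hd4 : orderOf (f n) ∣ p ^ m := by
        rw [hje]; exact Nat.Coprime.dvd_of_dvd_mul_right hcop hd3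
      exact orderOf_dvd_iff_pow_eq_one.mp hd4
    -- each f n is represented by a p^m-th root of unity
    have hS : ∀ n, ∃ ζ : Fˣ, ζ ^ p ^ m = 1 ∧ f n = QuotientGroup.mk ζ := by
      intro n
      obtain ⟨a, ha⟩ := QuotientGroup.mk_surjective (f (n + m))
      have h1 : ((a ^ p ^ m : Fˣ) : Fˣ ⧸ (powMonoidHom (p ^ (n + m)) : Fˣ →* Fˣ).range) = 1 := by
        rw [QuotientGroup.mk_pow, ha]
        exact hfm (n + m)
      obtain ⟨b, hb⟩ := (QuotientGroup.eq_one_iff _).mp h1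
      have hb' : b ^ p ^ (n + m) = a ^ p ^ m := hb
      refine ⟨a * (b ^ p ^ n)⁻¹, ?_, ?_⟩
      · rw [mul_pow, inv_pow, ← pow_mul, ← pow_add, hb']
        group
      · have hfa : f n = QuotientGroup.mk a := hproj n m a ha.symm
        rw [hfa]
        refine (QuotientGroup.eq ..).mpr ?_
        have : a⁻¹ * (a * (b ^ p ^ n)⁻¹) = (b ^ p ^ n)⁻¹ := by group
        rw [this]
        exact Subgroup.inv_mem _ ⟨b, rfl⟩
    choose g hg1 hg2 using hS
    haveI : Finite ↥{ζ : Fˣ | ∃ n : ℕ, ζ ^ p ^ n = 1} := hfin.to_subtype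
    obtain ⟨⟨ζ, hζT⟩, hinf⟩ := Finite.exists_infinite_fiber
      (fun n : ℕ => (⟨g n, ⟨m, hg1 n⟩⟩ : ↥{ζ : Fˣ | ∃ n : ℕ, ζ ^ p ^ n = 1}))
    have hinf2 := Set.infinite_coe_iff.mp hinf
    have hbig : ∀ n : ℕ, ∃ N, n ≤ N ∧ g N = ζ := by
      intro n
      obtain ⟨N, hN1, hN2⟩ := hinf2.exists_gt n
      exact ⟨N, le_of_lt hN2, congrArg Subtype.val hN1⟩
    obtain ⟨N0, _, hN0⟩ := hbig 0
    refine ⟨ζ, ⟨m, by rw [← hN0]; exact hg1 N0⟩, ?_⟩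
    funext n
    obtain ⟨N, hN1, hN2⟩ := hbig n
    have : f N = QuotientGroup.mk ζ := by rw [← hN2]; exact hg2 N
    have hNe : n + (N - n) = N := Nat.add_sub_cancel' hN1
    exact hproj n (N - n) ζ (by rw [hNe]; exact this)
  · rintro ⟨ζ, ⟨n, hζ⟩, rfl⟩
    refine ⟨p ^ n, (pow_pos hp.pos n).ne', ?_⟩
    funext j
    show (QuotientGroup.mk ζ : Fˣ ⧸ (powMonoidHom (p ^ j) : Fˣ →* Fˣ).range) ^ p ^ n = 1
    rw [← QuotientGroup.mk_pow, hζ, QuotientGroup.mk_one]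
end

section
/- If F is a field of characteristic different from p whose group of p-power roots of unity is infinite (hence p-divisible), then the torsion subgroup of the p-adic completion lim_n F*/(F*)^{p^n} of F* is trivial. -/
lemma aux_root {F : Type*} [Field F] {p : ℕ} (hp : p.Prime)
    (hinf : {ζ : Fˣ | ∃ n : ℕ, ζ ^ p ^ n = 1}.Infinite)
    (n a : ℕ) {w : Fˣ} (hw : w ^ p ^ a = 1) : ∃ η : Fˣ, η ^ p ^ n = w := by
  haveI : NeZero (p ^ a) := ⟨pow_ne_zero a hp.ne_zero⟩
  haveI : NeZero (p ^ (n + a)) := ⟨pow_ne_zero _ hp.ne_zero⟩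
  have hfin : {ζ : Fˣ | ζ ^ p ^ (n + a) = 1}.Finite := by
    classical
    have hfin2 : {x : F | x ^ p ^ (n + a) = 1}.Finite :=
      Set.Finite.subset (Polynomial.nthRoots (p ^ (n + a)) (1 : F)).toFinset.finite_toSet
        (fun x hx => Multiset.mem_toFinset.mpr
          ((Polynomial.mem_nthRoots (pow_pos hp.pos _)).mpr hx))
    have heq : {ζ : Fˣ | ζ ^ p ^ (n + a) = 1} =
        (fun ζ : Fˣ => (ζ : F)) ⁻¹' {x : F | x ^ p ^ (n + a) = 1} := by
      ext ζ
      constructor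
      · intro h
        have h' : ζ ^ p ^ (n + a) = 1 := h
        simp only [Set.mem_preimage, Set.mem_setOf_eq, ← Units.val_pow_eq_pow_val, h',
          Units.val_one]
      · intro h
        have : ((ζ ^ p ^ (n + a) : Fˣ) : F) = ((1 : Fˣ) : F) := by
          simpa [Units.val_pow_eq_pow_val] using h
        exact Units.ext this
    rw [heq]
    exact Set.Finite.preimage (fun x _ y _ h => Units.ext h) hfin2
  obtain ⟨ζ, hζS, hζT⟩ := (hinf.diff hfin).nonempty
  obtain ⟨m, hm⟩ := hζS
  obtain ⟨b, hb, hbord⟩ := (Nat.dvd_prime_pow hp).mp (orderOf_dvd_of_pow_eq_one hm)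
  have hbgt : n + a < b := by
    by_contra h
    exact hζT (orderOf_dvd_iff_pow_eq_one.mp (hbord ▸ pow_dvd_pow p (le_of_not_gt h)))
  set g := ζ ^ p ^ (b - a) with hg
  have hga : orderOf g = p ^ a := by
    rw [hg, orderOf_pow' _ (pow_ne_zero _ hp.ne_zero), hbord,
      Nat.gcd_eq_right (pow_dvd_pow p (by omega)),
      Nat.pow_div (by omega) hp.pos, Nat.sub_sub_self (by omega)]
  have hprim : IsPrimitiveRoot g (p ^ a) := hga ▸ IsPrimitiveRoot.orderOf g
  have hwz : w ∈ Subgroup.zpowers g := by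
    rw [hprim.zpowers_eq]
    exact (mem_rootsOfUnity _ _).mpr hw
  have hfo : IsOfFinOrder g := orderOf_pos_iff.mp (by rw [hga]; exact pow_pos hp.pos a)
  obtain ⟨j, hj⟩ := hfo.mem_powers_iff_mem_zpowers.mpr hwz
  refine ⟨ζ ^ (p ^ (b - a - n) * j), ?_⟩
  rw [← pow_mul]
  have : p ^ (b - a - n) * j * p ^ n = p ^ (b - a) * j := by
    rw [mul_right_comm, ← pow_add, Nat.sub_add_cancel (by omega)]
  rw [this, pow_mul, ← hg]
  exact hj

/-- If `F` is a field of characteristic different from `p` whose group of `p`-power roots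
of unity is infinite (hence `p`-divisible), then the torsion subgroup of the `p`-adic
completion `lim_n F*/(F*)^{p^n}` of `F*` is trivial. -/
theorem torsion_of_padicCompletion_trivial (p : ℕ) [Fact p.Prime]
    (F : Type*) [Field F] (hchar : (p : F) ≠ 0)
    (hinf : {ζ : Fˣ | ∃ n : ℕ, ζ ^ p ^ n = 1}.Infinite)
    (f : ∀ n : ℕ, Fˣ ⧸ (powMonoidHom (p ^ n) : Fˣ →* Fˣ).range)
    (hf : f ∈ padicCompletion p Fˣ) (htor : ∃ k : ℕ, k ≠ 0 ∧ f ^ k = 1) :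
    f = 1 := by
  obtain ⟨k, hk0, hfk⟩ := htor
  have hp : p.Prime := Fact.out
  -- every component is p^n-torsion
  have hpow : ∀ n : ℕ, f n ^ p ^ n = 1 := by
    intro n
    obtain ⟨x, hx⟩ := QuotientGroup.mk_surjective (f n)
    rw [← hx]
    have : ((QuotientGroup.mk' (powMonoidHom (p ^ n) : Fˣ →* Fˣ).range) x) ^ p ^ n = 1 := by
      rw [← map_pow]
      exact (QuotientGroup.eq_one_iff _).mpr ⟨x, rfl⟩
    exact this
  -- compatibility: f n is determined by any later component
  have key : ∀ n a : ℕ, ∀ x : Fˣ, f (n + a) = QuotientGroup.mk x → f n = QuotientGroup.mk x := by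
    intro n a
    induction a with
    | zero => exact fun x h => h
    | succ a ih =>
      intro x h
      refine ih x ?_
      have hfa := hf (n + a)
      rw [← hfa]
      have h' : f (n + a + 1) = QuotientGroup.mk x := h
      rw [h', QuotientGroup.map_mk]
      rfl
  funext n
  show f n = 1
  set a := k.factorization p with ha
  have hk : f (n + a) ^ k = 1 := by
    have := congrFun hfk (n + a)
    simpa using this
  -- order of f (n+a) divides p^a
  have hpa : f (n + a) ^ p ^ a = 1 := by
    apply orderOf_dvd_iff_pow_eq_one.mp
    obtain ⟨b, _, hbord⟩ :=
      (Nat.dvd_prime_pow hp).mp (orderOf_dvd_of_pow_eq_one (hpow (n + a)))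
    have hdvd2 : orderOf (f (n + a)) ∣ k := orderOf_dvd_of_pow_eq_one hk
    rw [hbord] at hdvd2 ⊢
    rw [← Nat.ordProj_mul_ordCompl_eq_self k p] at hdvd2
    exact Nat.Coprime.dvd_of_dvd_mul_right
      ((hp.coprime_iff_not_dvd.mpr (Nat.not_dvd_ordCompl hp hk0)).pow_left b) hdvd2
  obtain ⟨x, hx⟩ := QuotientGroup.mk_surjective (f (n + a))
  have hmem : x ^ p ^ a ∈ (powMonoidHom (p ^ (n + a)) : Fˣ →* Fˣ).range := by
    apply (QuotientGroup.eq_one_iff _).mp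
    have : ((QuotientGroup.mk' (powMonoidHom (p ^ (n + a)) : Fˣ →* Fˣ).range) x) ^ p ^ a = 1 := by
      have hx' : (QuotientGroup.mk' (powMonoidHom (p ^ (n + a)) : Fˣ →* Fˣ).range) x
          = f (n + a) := hx
      rw [hx']
      exact hpa
    rw [← map_pow] at this
    exact this
  obtain ⟨v, hv⟩ := hmem
  have hv' : v ^ p ^ (n + a) = x ^ p ^ a := hv
  have hvpow : (v ^ p ^ n) ^ p ^ a = x ^ p ^ a := by
    rw [← pow_mul, ← pow_add]
    exact hv'
  have hw : (x * (v ^ p ^ n)⁻¹) ^ p ^ a = 1 := by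
    rw [mul_pow, inv_pow, hvpow]
    simp
  obtain ⟨η, hη⟩ := aux_root hp hinf n a hw
  have hxmem : x ∈ (powMonoidHom (p ^ n) : Fˣ →* Fˣ).range := by
    refine ⟨η * v, ?_⟩
    show (η * v) ^ p ^ n = x
    rw [mul_pow, hη]
    group
  rw [key n a x hx.symm]
  exact (QuotientGroup.eq_one_iff _).mpr hxmem
end

section
/- Let F be a number field, Q a finite set of finite places, and p a prime. An element x̄ of the p-adic completion of F* lies in the (image of the) p-adic completion of the Q-units E_Q if and only if v_q(x̄) = 0 for every finite place q ∉ Q, where v_q denotes the map on p-adic completions induced by the normalized valuation at q. -/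
open IsDedekindDomain NumberField

/-- A group homomorphism sends `p^n`-th powers to `p^n`-th powers; this lets the identity
(resp. an inclusion) induce maps between the quotients `M/M^{p^n}`. -/
theorem map_pow_range_le {G H : Type*} [CommGroup G] [CommGroup H] (φ : G →* H) (k : ℕ) :
    (powMonoidHom k : G →* G).range ≤ Subgroup.comap φ (powMonoidHom k : H →* H).range := by
  rintro x ⟨y, rfl⟩
  exact ⟨φ y, by simp [powMonoidHom_apply]⟩

/-- The group `E_Q` of `Q`-units of a number field `F`: elements of `F*` whose valuation
is trivial at every finite place outside `Q`. -/
def QUnits (F : Type*) [Field F] [NumberField F]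
    (Q : Set (HeightOneSpectrum (𝓞 F))) : Subgroup Fˣ where
  carrier := {x | ∀ v ∉ Q, v.valuation F (x : F) = 1}
  mul_mem' := by
    intro a b ha hb v hv
    rw [Units.val_mul, map_mul, ha v hv, hb v hv, one_mul]
  one_mem' := by
    intro v hv
    simp
  inv_mem' := by
    intro a ha v hv
    rw [Units.val_inv_eq_inv_val, map_inv₀, ha v hv, inv_one]

/-- The additive valuation `v_q : F* → ℤ` at a finite place `q` of a number field. -/
noncomputable def zval {F : Type*} [Field F] [NumberField F]
    (v : HeightOneSpectrum (𝓞 F)) (x : Fˣ) : ℤ :=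
  - Multiplicative.toAdd (WithZero.unzero
      ((Valuation.ne_zero_iff _).mpr (Units.ne_zero x) : v.valuation F (x : F) ≠ 0))


section Helpers

open Multiplicative FractionalIdeal
open scoped nonZeroDivisors

variable {F : Type*} [Field F] [NumberField F]

theorem zval_eq_valuationOfNeZero (v : HeightOneSpectrum (𝓞 F)) (x : Fˣ) :
    zval v x = - Multiplicative.toAdd (v.valuationOfNeZero x) := by
  have h : (WithZero.unzero
      ((Valuation.ne_zero_iff _).mpr (Units.ne_zero x) : v.valuation F (x : F) ≠ 0)) =
      v.valuationOfNeZero x := by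
    rw [← WithZero.coe_inj, WithZero.coe_unzero, v.valuationOfNeZero_eq]
  rw [zval, h]

theorem zval_mul (v : HeightOneSpectrum (𝓞 F)) (x y : Fˣ) :
    zval v (x * y) = zval v x + zval v y := by
  simp only [zval_eq_valuationOfNeZero, _root_.map_mul, toAdd_mul]; ring

theorem zval_inv (v : HeightOneSpectrum (𝓞 F)) (x : Fˣ) : zval v x⁻¹ = - zval v x := by
  simp only [zval_eq_valuationOfNeZero, _root_.map_inv, toAdd_inv]

theorem zval_pow (v : HeightOneSpectrum (𝓞 F)) (x : Fˣ) (m : ℕ) :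
    zval v (x ^ m) = (m : ℤ) * zval v x := by
  simp only [zval_eq_valuationOfNeZero, _root_.map_pow, toAdd_pow]; ring

theorem zval_eq_zero_iff (v : HeightOneSpectrum (𝓞 F)) (x : Fˣ) :
    zval v x = 0 ↔ v.valuation F (x : F) = 1 := by
  rw [zval_eq_valuationOfNeZero, neg_eq_zero, ← toAdd_one, toAdd.apply_eq_iff_eq,
    ← WithZero.coe_inj, v.valuationOfNeZero_eq, WithZero.coe_one]

theorem mem_QUnits_iff {Q : Set (HeightOneSpectrum (𝓞 F))} (x : Fˣ) :
    x ∈ QUnits F Q ↔ ∀ v ∉ Q, zval v x = 0 := by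
  have h : x ∈ QUnits F Q ↔ ∀ v ∉ Q, v.valuation F (x : F) = 1 := Iff.rfl
  rw [h]
  exact forall_congr' fun v => forall_congr' fun hv => (zval_eq_zero_iff v x).symm

theorem zval_eq_count (v : HeightOneSpectrum (𝓞 F)) (x : Fˣ) :
    zval v x = FractionalIdeal.count F v (spanSingleton (𝓞 F)⁰ (x : F)) := by
  classical
  obtain ⟨⟨n, d⟩, h⟩ := IsLocalization.mk'_surjective (𝓞 F)⁰ (x : F)
  change IsLocalization.mk' F n d = (x : F) at h
  have hn : n ≠ 0 := by
    rintro rfl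
    rw [IsLocalization.mk'_zero] at h
    exact Units.ne_zero x h.symm
  have hd : (d : 𝓞 F) ≠ 0 := nonZeroDivisors.coe_ne_zero d
  have h0 : spanSingleton (𝓞 F)⁰ (x : F) ≠ 0 :=
    spanSingleton_ne_zero_iff.mpr (Units.ne_zero x)
  have hspan : spanSingleton (𝓞 F)⁰ (x : F) =
      spanSingleton (𝓞 F)⁰ ((algebraMap (𝓞 F) F) (d : 𝓞 F))⁻¹ *
        ↑(Ideal.span {n} : Ideal (𝓞 F)) := by
    rw [coeIdeal_span_singleton, spanSingleton_mul_spanSingleton, ← h,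
      IsFractionRing.mk'_eq_div, div_eq_mul_inv, mul_comm]
  rw [count_well_defined F v h0 hspan]
  set cn : ℤ := ((Associates.mk v.asIdeal).count (Associates.mk (Ideal.span {n})).factors : ℤ)
  set cd : ℤ := ((Associates.mk v.asIdeal).count
    (Associates.mk (Ideal.span {(d : 𝓞 F)})).factors : ℤ)
  have hval : v.valuation F (x : F) = v.intValuationDef n / v.intValuationDef (d : 𝓞 F) := by
    rw [← h, IsDedekindDomain.HeightOneSpectrum.valuation_of_mk']
    rfl
  have h2 : v.valuationOfNeZero x = Multiplicative.ofAdd (cd - cn) := by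
    rw [← WithZero.coe_inj, v.valuationOfNeZero_eq, hval,
      v.intValuationDef_if_neg hn, v.intValuationDef_if_neg hd, WithZero.exp, WithZero.exp,
        ← WithZero.coe_div,
      WithZero.coe_inj, ← ofAdd_sub]
    congr 1
    ring
  rw [zval_eq_valuationOfNeZero, h2, toAdd_ofAdd]
  ring

theorem zval_support_finite (x : Fˣ) :
    {v : HeightOneSpectrum (𝓞 F) | zval v x ≠ 0}.Finite := by
  have h := FractionalIdeal.finite_factors (R := 𝓞 F) (K := F)
    (spanSingleton (𝓞 F)⁰ (x : F))
  rw [Filter.eventually_cofinite] at h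
  apply h.subset
  intro v hv
  simp only [Set.mem_setOf_eq, zval_eq_count] at hv ⊢
  exact hv

end Helpers


section ClassGroupHelpers

open Multiplicative FractionalIdeal
open scoped nonZeroDivisors Classical

variable {F : Type*} [Field F] [NumberField F]

theorem count_finset_prod (S : Finset (HeightOneSpectrum (𝓞 F)))
    (e : HeightOneSpectrum (𝓞 F) → ℤ) (w : HeightOneSpectrum (𝓞 F)) :
    FractionalIdeal.count F w
      (∏ v ∈ S, (v.asIdeal : FractionalIdeal (𝓞 F)⁰ F) ^ (e v)) =
      if w ∈ S then e w else 0 := by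
  classical
  rw [FractionalIdeal.count_prod F w S _ (fun v _ => zpow_ne_zero _ (coeIdeal_ne_zero.mpr v.ne_bot))]
  rw [Finset.sum_congr rfl (fun v _ => by rw [count_zpow, count_maximal])]
  simp only [mul_ite, mul_one, mul_zero]
  exact Finset.sum_ite_eq' S w e

/-- The subgroup of the class group generated by classes of primes in `Q`. -/
noncomputable def Hsub (F : Type*) [Field F] [NumberField F] (Q : Set (HeightOneSpectrum (𝓞 F))) :
    Subgroup (ClassGroup (𝓞 F)) :=
  Subgroup.closure ((fun v : HeightOneSpectrum (𝓞 F) =>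
    ClassGroup.mk F (Units.mk0 (v.asIdeal : FractionalIdeal (𝓞 F)⁰ F)
      (coeIdeal_ne_zero.mpr v.ne_bot))) '' Q)

theorem mk_mem_Hsub {Q : Set (HeightOneSpectrum (𝓞 F))}
    (I : (FractionalIdeal (𝓞 F)⁰ F)ˣ)
    (hI : ∀ w ∉ Q, FractionalIdeal.count F w (I : FractionalIdeal (𝓞 F)⁰ F) = 0) :
    ClassGroup.mk F I ∈ Hsub F Q := by
  classical
  have hI0 : (I : FractionalIdeal (𝓞 F)⁰ F) ≠ 0 := Units.ne_zero I
  have hfin := FractionalIdeal.finite_factors (I : FractionalIdeal (𝓞 F)⁰ F)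
  rw [Filter.eventually_cofinite] at hfin
  set T : Finset (HeightOneSpectrum (𝓞 F)) := hfin.toFinset with hT
  have hUval : (I : FractionalIdeal (𝓞 F)⁰ F) =
      ∏ w ∈ T, (w.asIdeal : FractionalIdeal (𝓞 F)⁰ F) ^
        (FractionalIdeal.count F w (I : FractionalIdeal (𝓞 F)⁰ F)) := by
    conv_lhs => rw [← FractionalIdeal.finprod_heightOneSpectrum_factorization' F hI0]
    refine finprod_eq_prod_of_mulSupport_subset _ ?_
    intro w hw
    rw [Function.mem_mulSupport] at hw
    rw [Set.Finite.coe_toFinset]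
    intro h0
    exact hw (by rw [h0, zpow_zero])
  have hU : I = ∏ w ∈ T, (Units.mk0 (w.asIdeal : FractionalIdeal (𝓞 F)⁰ F)
      (coeIdeal_ne_zero.mpr w.ne_bot)) ^
        (FractionalIdeal.count F w (I : FractionalIdeal (𝓞 F)⁰ F)) := by
    apply Units.ext
    push_cast
    exact hUval
  rw [hU, map_prod]
  apply Subgroup.prod_mem
  intro w hwT
  have hwQ : w ∈ Q := by
    by_contra hwQ
    rw [hT, Set.Finite.mem_toFinset, Set.mem_setOf_eq] at hwT
    exact hwT (hI w hwQ)
  rw [map_zpow]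
  apply Subgroup.zpow_mem
  exact Subgroup.subset_closure (Set.mem_image_of_mem _ hwQ)

theorem exists_of_mem_Hsub {Q : Set (HeightOneSpectrum (𝓞 F))} {c : ClassGroup (𝓞 F)}
    (hc : c ∈ Hsub F Q) :
    ∃ B : (FractionalIdeal (𝓞 F)⁰ F)ˣ,
      (∀ w ∉ Q, FractionalIdeal.count F w (B : FractionalIdeal (𝓞 F)⁰ F) = 0) ∧
        ClassGroup.mk F B = c := by
  refine Subgroup.closure_induction ?_ ?_ ?_ ?_ hc
  · rintro x ⟨v, hvQ, rfl⟩
    refine ⟨Units.mk0 (v.asIdeal : FractionalIdeal (𝓞 F)⁰ F)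
      (coeIdeal_ne_zero.mpr v.ne_bot), fun w hw => ?_, rfl⟩
    rw [Units.val_mk0, count_maximal]
    rw [if_neg]
    intro h
    exact hw (h ▸ hvQ)
  · exact ⟨1, fun w _ => by rw [Units.val_one, count_one], map_one _⟩
  · rintro x y _ _ ⟨B, hB, rfl⟩ ⟨B', hB', rfl⟩
    refine ⟨B * B', fun w hw => ?_, map_mul _ _ _⟩
    rw [Units.val_mul, count_mul F w (Units.ne_zero B) (Units.ne_zero B'), hB w hw,
      hB' w hw, add_zero]
  · rintro x _ ⟨B, hB, rfl⟩
    refine ⟨B⁻¹, fun w hw => ?_, map_inv _ _⟩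
    rw [Units.val_inv_eq_inv_val, count_inv, hB w hw, neg_zero]

theorem key_lift (p : ℕ) (hp : p.Prime) {Q : Set (HeightOneSpectrum (𝓞 F))} (n : ℕ) (x : Fˣ)
    (hx : ∀ v ∉ Q, (p : ℤ) ^ (n + Fintype.card (ClassGroup (𝓞 F))) ∣ zval v x) :
    ∃ u ∈ QUnits F Q, ∃ y : Fˣ, x = u * y ^ (p ^ n) := by
  classical
  set k := Fintype.card (ClassGroup (𝓞 F)) with hk
  -- exponents
  set e : HeightOneSpectrum (𝓞 F) → ℤ :=
    fun v => if v ∈ Q then 0 else zval v x / (p : ℤ) ^ (n + k) with he_def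
  have he : ∀ v ∉ Q, (p : ℤ) ^ (n + k) * e v = zval v x := by
    intro v hv
    rw [he_def]
    simp only [if_neg hv]
    exact Int.mul_ediv_cancel' (hx v hv)
  set S : Finset (HeightOneSpectrum (𝓞 F)) := (zval_support_finite x).toFinset with hS
  have he0 : ∀ v, v ∉ S → e v = 0 := by
    intro v hvS
    have hz : zval v x = 0 := by
      by_contra h
      exact hvS ((zval_support_finite x).mem_toFinset.mpr h)
    rw [he_def]
    simp only [hz, Int.zero_ediv, ite_self]
  set J : FractionalIdeal (𝓞 F)⁰ F :=
    ∏ v ∈ S, (v.asIdeal : FractionalIdeal (𝓞 F)⁰ F) ^ (e v) with hJ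
  have hJ0 : J ≠ 0 := by
    rw [hJ]
    exact Finset.prod_ne_zero_iff.mpr fun v _ => zpow_ne_zero _ (coeIdeal_ne_zero.mpr v.ne_bot)
  have hcntJ : ∀ w, FractionalIdeal.count F w J = e w := by
    intro w
    rw [hJ, count_finset_prod]
    split_ifs with h
    · rfl
    · exact (he0 w h).symm
  set Ju : (FractionalIdeal (𝓞 F)⁰ F)ˣ := Units.mk0 J hJ0 with hJu
  set Pu : (FractionalIdeal (𝓞 F)⁰ F)ˣ := toPrincipalIdeal (𝓞 F) F x with hPu
  have hPval : (Pu : FractionalIdeal (𝓞 F)⁰ F) = spanSingleton (𝓞 F)⁰ (x : F) :=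
    coe_toPrincipalIdeal x
  have hcntP : ∀ w, FractionalIdeal.count F w (Pu : FractionalIdeal (𝓞 F)⁰ F) = zval w x := by
    intro w
    rw [hPval, ← zval_eq_count]
  have hJuval : (Ju : FractionalIdeal (𝓞 F)⁰ F) = J := rfl
  -- the class of Ju ^ p ^ (n + k) is in Hsub
  have hD : ClassGroup.mk F (Ju ^ p ^ (n + k) * Pu⁻¹) ∈ Hsub F Q := by
    apply mk_mem_Hsub
    intro w hw
    rw [Units.val_mul, Units.val_inv_eq_inv_val, Units.val_pow_eq_pow_val, hJuval,
      count_mul F w (pow_ne_zero _ hJ0) (inv_ne_zero (Units.ne_zero Pu)),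
      count_inv, count_pow, hcntJ, hcntP, ← he w hw]
    push_cast
    ring
  have hPu1 : ClassGroup.mk F Pu = 1 := by
    rw [ClassGroup.mk_eq_one_iff]
    exact ⟨⟨(x : F), by rw [hPval, coe_spanSingleton]⟩⟩
  have hJM : ClassGroup.mk F Ju ^ p ^ (n + k) ∈ Hsub F Q := by
    have h1 : Ju ^ p ^ (n + k) = Ju ^ p ^ (n + k) * Pu⁻¹ * Pu := by group
    rw [← map_pow, h1, _root_.map_mul, hPu1, mul_one]
    exact hD
  haveI hnormal : (Hsub F Q).Normal := Subgroup.normal_of_comm _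
  have hordc : ((ClassGroup.mk F Ju : ClassGroup (𝓞 F)) : ClassGroup (𝓞 F) ⧸ Hsub F Q) ^
      p ^ (n + k) = 1 := by
    rw [← QuotientGroup.mk_pow, QuotientGroup.eq_one_iff]
    exact hJM
  obtain ⟨m, hm, hordm⟩ := (Nat.dvd_prime_pow hp).mp (orderOf_dvd_of_pow_eq_one hordc)
  haveI hfin : Finite (ClassGroup (𝓞 F) ⧸ Hsub F Q) := Quotient.finite _
  have hle : p ^ m ≤ p ^ k := by
    calc p ^ m = orderOf ((ClassGroup.mk F Ju : ClassGroup (𝓞 F)) :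
          ClassGroup (𝓞 F) ⧸ Hsub F Q) := hordm.symm
      _ ≤ Nat.card (ClassGroup (𝓞 F) ⧸ Hsub F Q) :=
          Nat.le_of_dvd Nat.card_pos (orderOf_dvd_natCard _)
      _ ≤ Nat.card (ClassGroup (𝓞 F)) :=
          Nat.card_le_card_of_surjective _ (QuotientGroup.mk'_surjective _)
      _ = k := Nat.card_eq_fintype_card
      _ ≤ 2 ^ k := (Nat.lt_two_pow_self).le
      _ ≤ p ^ k := Nat.pow_le_pow_left hp.two_le k
  have hmk : m ≤ k := (Nat.pow_le_pow_iff_right hp.one_lt).mp hle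
  have hpk : ((ClassGroup.mk F Ju : ClassGroup (𝓞 F)) : ClassGroup (𝓞 F) ⧸ Hsub F Q) ^
      p ^ k = 1 := by
    apply orderOf_dvd_iff_pow_eq_one.mp
    rw [hordm]
    exact pow_dvd_pow p hmk
  have hJk : ClassGroup.mk F (Ju ^ p ^ k) ∈ Hsub F Q := by
    rw [map_pow, ← QuotientGroup.eq_one_iff (G := ClassGroup (𝓞 F)), QuotientGroup.mk_pow]
    exact hpk
  obtain ⟨B, hBcnt, hBmk⟩ := exists_of_mem_Hsub hJk
  have hprin : ClassGroup.mk F (Ju ^ p ^ k * B⁻¹) = 1 := by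
    rw [_root_.map_mul, _root_.map_inv, hBmk, mul_inv_cancel]
  obtain ⟨y, hy⟩ := (ClassGroup.mk_eq_one_iff.mp hprin).principal
  have hyF : ((Ju ^ p ^ k * B⁻¹ : (FractionalIdeal (𝓞 F)⁰ F)ˣ) :
      FractionalIdeal (𝓞 F)⁰ F) = spanSingleton (𝓞 F)⁰ y := by
    apply coeToSubmodule_injective
    show ((Ju ^ p ^ k * B⁻¹ : (FractionalIdeal (𝓞 F)⁰ F)ˣ) : FractionalIdeal (𝓞 F)⁰ F).coeToSubmodule
      = (spanSingleton (𝓞 F)⁰ y : FractionalIdeal (𝓞 F)⁰ F).coeToSubmodule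
    rw [coe_spanSingleton]
    exact hy
  have hy0 : y ≠ 0 := by
    intro h0
    apply Units.ne_zero (Ju ^ p ^ k * B⁻¹)
    rw [hyF, h0, spanSingleton_zero]
  have hzy : ∀ w ∉ Q, zval w (Units.mk0 y hy0) = (p : ℤ) ^ k * e w := by
    intro w hw
    rw [zval_eq_count, Units.val_mk0, ← hyF, Units.val_mul, Units.val_inv_eq_inv_val,
      Units.val_pow_eq_pow_val, hJuval,
      count_mul F w (pow_ne_zero _ hJ0) (inv_ne_zero (Units.ne_zero B)),
      count_inv, count_pow, hcntJ, hBcnt w hw]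
    push_cast
    ring
  refine ⟨x * ((Units.mk0 y hy0) ^ p ^ n)⁻¹, ?_, Units.mk0 y hy0, by group⟩
  rw [mem_QUnits_iff]
  intro w hw
  rw [zval_mul, zval_inv, zval_pow, hzy w hw, ← he w hw]
  push_cast
  ring

theorem QUnits_mk_eq_of_mk_eq {Q : Set (HeightOneSpectrum (𝓞 F))} (m : ℕ) (hm : m ≠ 0)
    (u w : QUnits F Q)
    (h : (QuotientGroup.mk (u : Fˣ) : Fˣ ⧸ (powMonoidHom m : Fˣ →* Fˣ).range) =
      QuotientGroup.mk (w : Fˣ)) :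
    (QuotientGroup.mk u : QUnits F Q ⧸ (powMonoidHom m : _ →* _).range) =
      QuotientGroup.mk w := by
  rw [QuotientGroup.eq] at h ⊢
  obtain ⟨y, hy⟩ := h
  have hy' : (y : Fˣ) ^ m = (↑u)⁻¹ * ↑w := hy
  have hymem : y ∈ QUnits F Q := by
    rw [mem_QUnits_iff]
    intro v hv
    have h2 : (m : ℤ) * zval v y = 0 := by
      rw [← zval_pow, hy', zval_mul, zval_inv, (mem_QUnits_iff _).mp u.2 v hv,
        (mem_QUnits_iff _).mp w.2 v hv]
      ring
    rcases mul_eq_zero.mp h2 with h3 | h3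
    · exact absurd h3 (by exact_mod_cast hm)
    · exact h3
  exact ⟨⟨y, hymem⟩, Subtype.ext (by simpa using hy')⟩

theorem f_n_of_f_add {M : Type*} [CommGroup M] (p : ℕ)
    (f : ∀ n : ℕ, M ⧸ (powMonoidHom (p ^ n) : M →* M).range)
    (hf : f ∈ padicCompletion p M) (n : ℕ) (x : M) (j : ℕ)
    (hx : (QuotientGroup.mk x : M ⧸ (powMonoidHom (p ^ (n + j)) : M →* M).range) = f (n + j)) :
    (QuotientGroup.mk x : M ⧸ (powMonoidHom (p ^ n) : M →* M).range) = f n := by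
  induction j with
  | zero => exact hx
  | succ j ih =>
    apply ih
    have hidx : n + (j + 1) = n + j + 1 := rfl
    rw [hidx] at hx
    have h2 := hf (n + j)
    rw [← h2, ← hx, QuotientGroup.map_mk]
    rfl

end ClassGroupHelpers

/-- Let `F` be a number field, `Q` a finite set of finite places and `p` a prime.  An
element `f` of the `p`-adic completion of `F*` lies in the image of the `p`-adic
completion of the `Q`-units `E_Q` if and only if `v_q(f) = 0` in `ℤ_p` for every finite
place `q ∉ Q` — i.e. iff for every `n` and every representative `x` of the `n`-th
component of `f`, the valuation `v_q(x)` is divisible by `p^n`. -/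
theorem mem_completion_QUnits_iff (p : ℕ) [Fact p.Prime]
    (F : Type*) [Field F] [NumberField F]
    (Q : Set (HeightOneSpectrum (𝓞 F))) (hQ : Q.Finite)
    (f : ∀ n : ℕ, Fˣ ⧸ (powMonoidHom (p ^ n) : Fˣ →* Fˣ).range)
    (hf : f ∈ padicCompletion p Fˣ) :
    (∃ g ∈ padicCompletion p (QUnits F Q),
        ∀ n, QuotientGroup.map _ _ (QUnits F Q).subtype
          (map_pow_range_le (QUnits F Q).subtype (p ^ n)) (g n) = f n) ↔
      ∀ v ∉ Q, ∀ (n : ℕ) (x : Fˣ),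
        (QuotientGroup.mk x : Fˣ ⧸ (powMonoidHom (p ^ n) : Fˣ →* Fˣ).range) = f n →
          (p : ℤ) ^ n ∣ zval v x := by
  have hp : p.Prime := Fact.out
  constructor
  · rintro ⟨g, hg, hgf⟩ v hv n x hx
    obtain ⟨u, hu⟩ := QuotientGroup.mk_surjective (g n)
    have hfn : (QuotientGroup.mk (u : Fˣ) :
        Fˣ ⧸ (powMonoidHom (p ^ n) : Fˣ →* Fˣ).range) = f n := by
      rw [← hgf n, ← hu, QuotientGroup.map_mk]
      rfl
    have h2 : (QuotientGroup.mk (u : Fˣ) :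
        Fˣ ⧸ (powMonoidHom (p ^ n) : Fˣ →* Fˣ).range) = QuotientGroup.mk x :=
      hfn.trans hx.symm
    rw [QuotientGroup.eq] at h2
    obtain ⟨y, hy⟩ := h2
    have h3 : (y : Fˣ) ^ p ^ n = (↑u)⁻¹ * x := hy
    have hxe : x = (u : Fˣ) * y ^ p ^ n := by
      rw [h3]
      group
    refine ⟨zval v y, ?_⟩
    rw [hxe, zval_mul, zval_pow, (mem_QUnits_iff _).mp u.2 v hv]
    push_cast
    ring
  · intro h
    have hlift : ∀ n : ℕ, ∃ u : Fˣ, u ∈ QUnits F Q ∧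
        (QuotientGroup.mk u : Fˣ ⧸ (powMonoidHom (p ^ n) : Fˣ →* Fˣ).range) = f n := by
      intro n
      obtain ⟨x, hx⟩ := QuotientGroup.mk_surjective (f (n + Fintype.card (ClassGroup (𝓞 F))))
      have hdvd : ∀ v ∉ Q, (p : ℤ) ^ (n + Fintype.card (ClassGroup (𝓞 F))) ∣ zval v x :=
        fun v hv => h v hv _ x hx
      obtain ⟨u, huQ, y, hxy⟩ := key_lift p hp n x hdvd
      refine ⟨u, huQ, ?_⟩
      have hfn : (QuotientGroup.mk x : Fˣ ⧸ (powMonoidHom (p ^ n) : Fˣ →* Fˣ).range) = f n :=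
        f_n_of_f_add p f hf n x _ hx
      rw [← hfn, QuotientGroup.eq]
      refine ⟨y, ?_⟩
      rw [powMonoidHom_apply, hxy]
      group
    choose U hU1 hU2 using hlift
    refine ⟨fun n => QuotientGroup.mk (⟨U n, hU1 n⟩ : QUnits F Q), ?_, ?_⟩
    · intro n
      rw [QuotientGroup.map_mk]
      have h1 : (QuotientGroup.mk (U (n + 1)) :
          Fˣ ⧸ (powMonoidHom (p ^ n) : Fˣ →* Fˣ).range) = f n :=
        f_n_of_f_add p f hf n (U (n + 1)) 1 (hU2 (n + 1))
      exact QUnits_mk_eq_of_mk_eq (p ^ n) (pow_ne_zero n hp.ne_zero)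
        ⟨U (n + 1), hU1 (n + 1)⟩ ⟨U n, hU1 n⟩ (h1.trans (hU2 n).symm)
    · intro n
      rw [QuotientGroup.map_mk]
      exact hU2 n
end

section
/- Let 1 → L → G → H → 1 be an extension of profinite groups with L ≅ Z_p^d, H a finite p-group acting trivially on L. If the extension class in H^2(H, L) becomes trivial after pushing out along an injection L ↪ L' of free rank-d Z_p-modules, then there is a continuous morphism G → L' restricting on L to the given inclusion; conversely, any surjective continuous morphism G → L'' onto a free rank-d Z_p-module restricts injectively to L and trivializes the pushout extension. -/
open Multiplicative

variable {p : ℕ} [Fact p.Prime] {d : ℕ}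

theorem key_det (A : Matrix (Fin d) (Fin d) ℤ_[p]) (n : ℕ) (hn : n ≠ 0)
    (h : ∀ x, ∃ y, A.mulVec y = n • x) : A.det ≠ 0 := by
  classical
  set B := A.map (PadicInt.Coe.ringHom (p := p)) with hB
  have hcast : ∀ y : Fin d → ℤ_[p],
      B.mulVec (fun i => (y i : ℚ_[p])) = fun i => ((A.mulVec y) i : ℚ_[p]) := by
    intro y
    ext i
    show ∑ x : Fin d, ((A i x : ℚ_[p]) * (y x : ℚ_[p])) = (((A.mulVec y) i : ℤ_[p]) : ℚ_[p])
    rw [Matrix.mulVec, dotProduct]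
    calc ∑ x : Fin d, ((A i x : ℚ_[p]) * (y x : ℚ_[p]))
        = ∑ x : Fin d, ((A i x * y x : ℤ_[p]) : ℚ_[p]) := by
          simp [PadicInt.coe_mul]
      _ = (((∑ x : Fin d, A i x * y x : ℤ_[p])) : ℚ_[p]) := by
          exact (map_sum (PadicInt.Coe.ringHom (p := p)) (fun x => A i x * y x) Finset.univ).symm
  have hsurj : Function.Surjective (Matrix.toLin' B) := by
    rw [← LinearMap.range_eq_top, ← top_le_iff,
      ← (Pi.basisFun ℚ_[p] (Fin d)).span_eq, Submodule.span_le]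
    rintro _ ⟨i, rfl⟩
    rw [SetLike.mem_coe, LinearMap.mem_range]
    obtain ⟨y, hy⟩ := h (Pi.single i 1)
    have hn' : (n : ℚ_[p]) ≠ 0 := Nat.cast_ne_zero.2 hn
    refine ⟨(n : ℚ_[p])⁻¹ • (fun j => ((y j : ℚ_[p]))), ?_⟩
    rw [map_smul, Matrix.toLin'_apply, hcast]
    have h2 : (fun i' => ((A.mulVec y) i' : ℚ_[p])) = (n : ℚ_[p]) • (Pi.single i 1 : Fin d → ℚ_[p]) := by
      rw [hy]
      ext j
      rcases eq_or_ne j i with rfl | hj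
      · simp
      · simp [Pi.single_eq_of_ne hj]
    rw [h2, smul_smul, inv_mul_cancel₀ hn', one_smul, Pi.basisFun_apply]
  have hBinj : Function.Injective (Matrix.toLin' B) :=
    LinearMap.injective_iff_surjective.2 hsurj
  have hdetB : B.det ≠ 0 := by
    intro h0
    obtain ⟨v, hv0, hv⟩ := (Matrix.exists_mulVec_eq_zero_iff).2 h0
    apply hv0
    apply hBinj
    rw [Matrix.toLin'_apply, hv, map_zero]
  intro h0
  apply hdetB
  have hBA : B.det = PadicInt.Coe.ringHom A.det := by
    rw [RingHom.map_det]
    rfl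
  rw [hBA, h0, map_zero]

theorem key_inj (F : (Fin d → ℤ_[p]) →ₗ[ℤ_[p]] (Fin d → ℤ_[p])) (n : ℕ) (hn : n ≠ 0)
    (h : ∀ x, ∃ y, F y = n • x) : Function.Injective F := by
  classical
  have hAF : ∀ y, (LinearMap.toMatrix' F).mulVec y = F y := by
    intro y
    rw [← Matrix.toLin'_apply, Matrix.toLin'_toMatrix']
  have hdet : (LinearMap.toMatrix' F).det ≠ 0 := by
    refine key_det _ n hn fun x => ?_
    obtain ⟨y, hy⟩ := h x
    exact ⟨y, by rw [hAF, hy]⟩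
  intro x y hxy
  by_contra hne
  refine hdet ((Matrix.exists_mulVec_eq_zero_iff).1 ⟨x - y, sub_ne_zero.2 hne, ?_⟩)
  rw [hAF, map_sub, hxy, sub_self]

theorem key_lin (F : (Fin d → ℤ_[p]) →+ (Fin d → ℤ_[p])) (hF : Continuous F)
    (c : ℤ_[p]) (v : Fin d → ℤ_[p]) : F (c • v) = c • F v := by
  have hsub : Set.range (Nat.cast : ℕ → ℤ_[p]) ⊆ {c : ℤ_[p] | F (c • v) = c • F v} := by
    rintro _ ⟨m, rfl⟩
    simp only [Set.mem_setOf_eq, Nat.cast_smul_eq_nsmul, map_nsmul]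
  have hclosed : IsClosed {c : ℤ_[p] | F (c • v) = c • F v} :=
    isClosed_eq (hF.comp (continuous_id.smul continuous_const))
      (continuous_id.smul continuous_const)
  have hdense : Dense {c : ℤ_[p] | F (c • v) = c • F v} :=
    PadicInt.denseRange_natCast.mono hsub
  have : {c : ℤ_[p] | F (c • v) = c • F v} = Set.univ := by
    rw [← hclosed.closure_eq, hdense.closure_eq]
  exact Set.eq_univ_iff_forall.1 this c

/-- Let `1 → L → G → H → 1` be an extension of profinite groups with `L ≅ ℤ_p^d`
(via `e`), `H` a finite `p`-group acting trivially on `L` (`L` central in `G`).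
The pushout of the extension along an injection `ι : L ↪ L'` of free rank-`d`
`ℤ_p`-modules is the quotient of `L' × G` by the elements `(ι(l)⁻¹, l)`, `l ∈ L`;
its class in `H²(H, L')` is trivial iff there is a continuous retraction
`r : L' × G → L'` with `r(a,1) = a` killing all `(ι(l)⁻¹, l)`.

(a) If the extension class becomes trivial after pushing out along `ι`, then there is a
continuous morphism `G → L'` restricting on `L` to `ι`; conversely
(b) any surjective continuous morphism `G → L''` onto a free rank-`d` `ℤ_p`-module
restricts injectively to `L` and trivializes the pushout along that restriction. -/
theorem pushout_trivial_iff_morphism (p : ℕ) [Fact p.Prime] (d : ℕ)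
    (G : Type*) [Group G] [TopologicalSpace G] [IsTopologicalGroup G]
    [CompactSpace G] [TotallyDisconnectedSpace G]
    (H : Type*) [Group H] [Finite H] [TopologicalSpace H] [DiscreteTopology H]
    (hH : IsPGroup p H)
    (π : G →* H) (hπcont : Continuous π) (hπsurj : Function.Surjective π)
    (e : π.ker ≃* Multiplicative (Fin d → ℤ_[p]))
    (hecont : Continuous e) (hesymm : Continuous e.symm)
    (htriv : ∀ (g : G) (k : π.ker), g * (k : G) * g⁻¹ = (k : G))
    (ι : (Fin d → ℤ_[p]) →ₗ[ℤ_[p]] (Fin d → ℤ_[p])) (hι : Function.Injective ι) :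
    -- (a)
    ((∃ r : Multiplicative (Fin d → ℤ_[p]) × G →* Multiplicative (Fin d → ℤ_[p]),
        Continuous r ∧ (∀ a, r (a, 1) = a) ∧
        ∀ k : π.ker,
          r ((Multiplicative.ofAdd (ι (Multiplicative.toAdd (e k))))⁻¹, (k : G)) = 1) →
      ∃ ψ : G →* Multiplicative (Fin d → ℤ_[p]), Continuous ψ ∧
        ∀ k : π.ker, ψ (k : G) = Multiplicative.ofAdd (ι (Multiplicative.toAdd (e k)))) ∧
    -- (b)
    ∀ ψ : G →* Multiplicative (Fin d → ℤ_[p]), Continuous ψ → Function.Surjective ψ →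
      (Function.Injective fun k : π.ker => ψ (k : G)) ∧
      ∃ r : Multiplicative (Fin d → ℤ_[p]) × G →* Multiplicative (Fin d → ℤ_[p]),
        Continuous r ∧ (∀ a, r (a, 1) = a) ∧
        ∀ k : π.ker, r ((ψ (k : G))⁻¹, (k : G)) = 1 := by
  constructor
  · -- (a)
    rintro ⟨r, hrc, hr1, hrk⟩
    refine ⟨r.comp (MonoidHom.inr _ G), hrc.comp (continuous_const.prodMk continuous_id), ?_⟩
    intro k
    have hk := hrk k
    have hsplit : (((ofAdd (ι (toAdd (e k))))⁻¹, (k : G)) :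
        Multiplicative (Fin d → ℤ_[p]) × G) =
        ((ofAdd (ι (toAdd (e k))))⁻¹, (1 : G)) * (1, (k : G)) := by
      rw [Prod.mk_mul_mk, mul_one, one_mul]
    rw [hsplit, map_mul, hr1] at hk
    have := inv_mul_eq_one.1 hk
    simpa [MonoidHom.comp_apply, MonoidHom.inr_apply] using this.symm
  · -- (b)
    intro ψ hψc hψs
    set n := Nat.card H with hn
    have hn0 : n ≠ 0 := Nat.card_pos.ne'
    -- the additive endomorphism of ℤ_p^d induced by ψ
    set Ffun : (Fin d → ℤ_[p]) → (Fin d → ℤ_[p]) :=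
      fun v => toAdd (ψ ((e.symm (ofAdd v) : π.ker) : G)) with hFfun
    have hFadd : ∀ a b, Ffun (a + b) = Ffun a + Ffun b := by
      intro a b
      show toAdd (ψ ((e.symm (ofAdd (a + b)) : π.ker) : G)) =
        toAdd (ψ ((e.symm (ofAdd a) : π.ker) : G)) + toAdd (ψ ((e.symm (ofAdd b) : π.ker) : G))
      rw [ofAdd_add, map_mul, Subgroup.coe_mul, map_mul, toAdd_mul]
    let Fa : (Fin d → ℤ_[p]) →+ (Fin d → ℤ_[p]) :=
      { toFun := Ffun
        map_zero' := by
          simp only [hFfun, ofAdd_zero, map_one, OneMemClass.coe_one, toAdd_one]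
        map_add' := hFadd }
    have hFc : Continuous Ffun :=
      continuous_toAdd.comp (hψc.comp (continuous_subtype_val.comp
        (hesymm.comp continuous_ofAdd)))
    have hsmul : ∀ (c : ℤ_[p]) (v), Fa (c • v) = c • Fa v := fun c v => key_lin Fa hFc c v
    let Flin : (Fin d → ℤ_[p]) →ₗ[ℤ_[p]] (Fin d → ℤ_[p]) :=
      { toFun := Ffun, map_add' := hFadd, map_smul' := hsmul }
    have hFk : ∀ k : π.ker, Ffun (toAdd (e k)) = toAdd (ψ (k : G)) := by
      intro k
      simp only [hFfun, ofAdd_toAdd, MulEquiv.symm_apply_apply]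
    have hFsurj : ∀ x, ∃ y, Flin y = n • x := by
      intro x
      obtain ⟨g, hg⟩ := hψs (ofAdd x)
      have hk : g ^ n ∈ π.ker := by
        rw [MonoidHom.mem_ker, map_pow, hn, pow_card_eq_one']
      refine ⟨toAdd (e ⟨g ^ n, hk⟩), ?_⟩
      show Ffun (toAdd (e ⟨g ^ n, hk⟩)) = n • x
      rw [hFk ⟨g ^ n, hk⟩]
      show toAdd (ψ (g ^ n)) = n • x
      rw [map_pow, hg, ← ofAdd_nsmul, toAdd_ofAdd]
    have hinj : Function.Injective Flin := key_inj Flin n hn0 hFsurj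
    constructor
    · intro k₁ k₂ hk
      simp only at hk
      have h1 : Ffun (toAdd (e k₁)) = Ffun (toAdd (e k₂)) := by
        rw [hFk, hFk, hk]
      have h2 : toAdd (e k₁) = toAdd (e k₂) := hinj h1
      have h3 : e k₁ = e k₂ := h2
      exact e.injective h3
    · refine ⟨(MonoidHom.fst _ G) * (ψ.comp (MonoidHom.snd _ G)), ?_, ?_, ?_⟩
      · exact continuous_fst.mul (hψc.comp continuous_snd)
      · intro a
        simp [MonoidHom.mul_apply]
      · intro k
        simp [MonoidHom.mul_apply]
end
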